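/- Let k >= 1 be an odd integer, tau > 0 a real number, eps in {1, -1}, and w = sqrt(tau). Then (w, 0) belongs to the real algebraic set Z = { (x,y) in R^2 : y^2 + eps*(x^2 - tau)^{k+1} = 0 }, and (w, 0) is an isolated point of Z if and only if eps = 1. -/

import Mathlib

/-- For the deformation `y² + ε (x² - τ)^{k+1} = 0` (`k` odd, `τ > 0`, `ε = ±1`) of the
real `A_{2k+1}` singularity, the point `(√τ, 0)` lies on the real algebraic set, and it
is an isolated point of it if and only if `ε = 1`. -/
theorem isolated_point_of_two_A_k_stratum_iff
    (k : ℕ) (hk : 1 ≤ k) (hodd : Odd k) (tau : ℝ) (htau : 0 < tau)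
    (eps : ℝ) (heps : eps = 1 ∨ eps = -1) :
    ((Real.sqrt tau, (0 : ℝ)) ∈
        {p : ℝ × ℝ | p.2 ^ 2 + eps * (p.1 ^ 2 - tau) ^ (k + 1) = 0}) ∧
    ((∃ ε > 0, ∀ q ∈ {p : ℝ × ℝ | p.2 ^ 2 + eps * (p.1 ^ 2 - tau) ^ (k + 1) = 0},
        dist q (Real.sqrt tau, (0 : ℝ)) < ε → q = (Real.sqrt tau, (0 : ℝ))) ↔
      eps = 1) := by
  set w := Real.sqrt tau with hwdef
  have hw : 0 < w := Real.sqrt_pos.mpr htau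
  have hw2 : w ^ 2 = tau := Real.sq_sqrt htau.le
  have heven : Even (k + 1) := by
    rcases hodd with ⟨m, hm⟩; exact ⟨m + 1, by omega⟩
  constructor
  · show (0:ℝ) ^ 2 + eps * (w ^ 2 - tau) ^ (k + 1) = 0
    rw [hw2, sub_self, zero_pow (show k+1 ≠ 0 by omega)]
    ring
  constructor
  · -- isolated → eps = 1
    intro ⟨ε, hε, hiso⟩
    by_contra hne
    have heps' : eps = -1 := heps.resolve_left hne
    subst heps'
    -- construct nearby point
    set c : ℝ := 2 * w + 1 with hc
    have hc0 : (1:ℝ) ≤ c := by nlinarith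
    set δ : ℝ := min (1 / c) (ε / (2 * c)) with hδdef
    have hδ0 : 0 < δ := lt_min (by positivity) (by positivity)
    have hδ1 : δ ≤ 1 / c := min_le_left _ _
    have hδ2 : δ ≤ ε / (2 * c) := min_le_right _ _
    set t : ℝ := (w + δ) ^ 2 - tau with ht
    have ht0 : 0 < t := by nlinarith
    have htc : t ≤ δ * c := by
      have : δ ≤ 1 := le_trans hδ1 (by rw [div_le_one (by linarith)]; exact hc0)
      nlinarith
    have ht1 : t ≤ 1 := le_trans htc (by
      calc δ * c ≤ (1 / c) * c := by nlinarith
        _ = 1 := by field_simp)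
    have hthalf : t ≤ ε / 2 := le_trans htc (by
      calc δ * c ≤ (ε / (2 * c)) * c := by nlinarith
        _ = ε / 2 := by field_simp)
    obtain ⟨m, hm⟩ := heven
    have hm1 : 1 ≤ m := by omega
    set q : ℝ × ℝ := (w + δ, t ^ m) with hq
    have hmem : q ∈ {p : ℝ × ℝ | p.2 ^ 2 + (-1) * (p.1 ^ 2 - tau) ^ (k + 1) = 0} := by
      show (t ^ m) ^ 2 + (-1) * ((w + δ) ^ 2 - tau) ^ (k + 1) = 0
      rw [← ht, ← pow_mul, hm]
      ring_nf
    have htm : t ^ m ≤ t := pow_le_of_le_one ht0.le ht1 (by omega)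
    have hdist : dist q (w, (0:ℝ)) < ε := by
      rw [Prod.dist_eq]
      have h1 : dist (w + δ) w < ε := by
        rw [Real.dist_eq]
        have : |w + δ - w| = δ := by rw [add_sub_cancel_left, abs_of_pos hδ0]
        rw [this]
        calc δ ≤ ε / (2 * c) := hδ2
          _ < ε := by rw [div_lt_iff₀ (by linarith)]; nlinarith
      have h2 : dist (t ^ m) (0:ℝ) < ε := by
        rw [Real.dist_eq, sub_zero, abs_of_pos (pow_pos ht0 m)]
        linarith
      exact max_lt h1 h2
    have := hiso q hmem hdist
    have : w + δ = w := congrArg Prod.fst this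
    linarith
  · -- eps = 1 → isolated
    intro heps1
    subst heps1
    refine ⟨w, hw, fun q hq hd => ?_⟩
    simp only [Set.mem_setOf_eq, one_mul] at hq
    have hp1 : (0:ℝ) ≤ q.2 ^ 2 := sq_nonneg _
    have hp2 : (0:ℝ) ≤ (q.1 ^ 2 - tau) ^ (k + 1) := heven.pow_nonneg _
    have h1 : q.2 ^ 2 = 0 := by linarith
    have h2 : (q.1 ^ 2 - tau) ^ (k + 1) = 0 := by linarith
    have hy : q.2 = 0 := by
      exact pow_eq_zero_iff (n := 2) (by norm_num) |>.mp h1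
    have hx2 : q.1 ^ 2 = tau := by
      have := pow_eq_zero_iff (n := k + 1) (by omega) |>.mp h2
      linarith [this]
    have hx : q.1 = w ∨ q.1 = -w := by
      have : q.1 ^ 2 = w ^ 2 := by rw [hw2, hx2]
      rcases sq_eq_sq_iff_eq_or_eq_neg.mp this with h | h
      · exact Or.inl h
      · exact Or.inr h
    rcases hx with h | h
    · exact Prod.ext h hy
    · exfalso
      have : dist q.1 w ≤ dist q (w, (0:ℝ)) := by
        rw [Prod.dist_eq]; exact le_max_left _ _
      rw [h, Real.dist_eq] at this
      have : |(-w) - w| = 2 * w := by rw [abs_of_nonpos (by linarith)]; ring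
      have habs : |(-w) - w| ≤ dist q (w, (0:ℝ)) := by
        rw [Prod.dist_eq]
        have := le_max_left (dist q.1 w) (dist q.2 0)
        rw [h, Real.dist_eq] at this ⊢
        exact this
      rw [this] at habs
      linarith
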